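/- Assume a set T of k codewords from a code of length m (with relative minimum distance δ ≥ 1 − 2/k²) is such that at every coordinate some two codewords of T agree. Then the sum of the C(k,2) pairwise Hamming distances between codewords of T is at most C(k,2)·m − m, and hence by averaging some pair of codewords has Hamming distance at most m·(1 − 1/C(k,2)) < m·(1 − 2/k²), a contradiction. -/

import Mathlib

/-- If a set `T` of `k` codewords of a code with relative minimum distance
`1 - 2/k²` is such that at every coordinate some two distinct codewords of `T` agree,
then the sum of pairwise Hamming distances is at most `C(k,2)·m - m`, some pair of
distinct codewords is at distance at most `m·(1 - 1/C(k,2)) < m·(1 - 2/k²)`, and this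
contradicts the minimum distance assumption. -/
theorem code_agreement_contradiction {A : Type*} [Fintype A] [DecidableEq A]
    (m k : ℕ) (hm : 1 ≤ m) (hk : 2 ≤ k)
    (T : Finset (Fin m → A)) (hT : T.card = k)
    (hdist : ∀ c ∈ T, ∀ c' ∈ T, c ≠ c' →
      (1 - 2 / (k : ℝ) ^ 2) * m ≤ ((Finset.univ.filter fun i : Fin m => c i ≠ c' i).card : ℝ))
    (hagree : ∀ i : Fin m, ∃ c ∈ T, ∃ c' ∈ T, c ≠ c' ∧ c i = c' i) :
    (∑ c ∈ T, ∑ c' ∈ T, ((Finset.univ.filter fun i : Fin m => c i ≠ c' i).card : ℝ)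
        ≤ 2 * ((k.choose 2 : ℝ) * m - m)) ∧
    (∃ c ∈ T, ∃ c' ∈ T, c ≠ c' ∧
      ((Finset.univ.filter fun i : Fin m => c i ≠ c' i).card : ℝ)
        ≤ m * (1 - 1 / (k.choose 2 : ℝ))) ∧
    (m : ℝ) * (1 - 1 / (k.choose 2 : ℝ)) < (m : ℝ) * (1 - 2 / (k : ℝ) ^ 2) ∧
    False := by
  have hk0 : (0:ℝ) < k := by positivity
  have hC : (k.choose 2 : ℝ) = k * (k - 1) / 2 := Nat.cast_choose_two (K:=ℝ) k
  have hk1 : (1:ℝ) ≤ (k:ℝ) - 1 := by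
    have : (2:ℝ) ≤ k := by exact_mod_cast hk
    linarith
  have hCpos : (0:ℝ) < (k.choose 2 : ℝ) := by rw [hC]; nlinarith
  have hm0 : (0:ℝ) < m := by positivity
  have hoffcard : T.offDiag.card = k * k - k := by
    rw [Finset.offDiag_card, hT]
  have hkle : k ≤ k * k := Nat.le_mul_of_pos_left k (by omega)
  have hkk : 2 ≤ k * k - k := by
    have h2 : 2 * k ≤ k * k := Nat.mul_le_mul_right k hk
    omega
  -- per coordinate bound
  have key : ∀ i : Fin m,
      ((T ×ˢ T).filter fun p => p.1 i ≠ p.2 i).card + 2 ≤ k * k - k := by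
    intro i
    obtain ⟨c, hc, c', hc', hne, heq⟩ := hagree i
    have hsub : ((T ×ˢ T).filter fun p => p.1 i ≠ p.2 i) ∪ {(c, c'), (c', c)}
        ⊆ T.offDiag := by
      intro p hp
      rcases Finset.mem_union.1 hp with hp | hp
      · simp only [Finset.mem_filter, Finset.mem_product] at hp
        refine Finset.mem_offDiag.2 ⟨hp.1.1, hp.1.2, ?_⟩
        intro h; exact hp.2 (by rw [h])
      · simp only [Finset.mem_insert, Finset.mem_singleton] at hp
        rcases hp with rfl | rfl
        · exact Finset.mem_offDiag.2 ⟨hc, hc', hne⟩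
        · exact Finset.mem_offDiag.2 ⟨hc', hc, hne.symm⟩
    have hdisj : Disjoint ((T ×ˢ T).filter fun p => p.1 i ≠ p.2 i)
        ({(c, c'), (c', c)} : Finset _) := by
      rw [Finset.disjoint_right]
      intro p hp hp2
      simp only [Finset.mem_insert, Finset.mem_singleton] at hp
      simp only [Finset.mem_filter] at hp2
      rcases hp with rfl | rfl
      · exact hp2.2 heq
      · exact hp2.2 heq.symm
    have hpair : ({(c, c'), (c', c)} : Finset ((Fin m → A) × (Fin m → A))).card = 2 := by
      rw [Finset.card_insert_of_notMem, Finset.card_singleton]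
      simp only [Finset.mem_singleton, Prod.mk.injEq, not_and]
      intro h; exact absurd h hne
    calc ((T ×ˢ T).filter fun p => p.1 i ≠ p.2 i).card + 2
        = (((T ×ˢ T).filter fun p => p.1 i ≠ p.2 i) ∪ {(c, c'), (c', c)}).card := by
          rw [Finset.card_union_of_disjoint hdisj, hpair]
      _ ≤ T.offDiag.card := Finset.card_le_card hsub
      _ = k * k - k := hoffcard
  have hswap : ∑ c ∈ T, ∑ c' ∈ T, (Finset.univ.filter fun i : Fin m => c i ≠ c' i).card
      = ∑ i : Fin m, ((T ×ˢ T).filter fun p => p.1 i ≠ p.2 i).card := by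
    rw [← Finset.sum_product']
    simp_rw [Finset.card_filter]
    rw [Finset.sum_comm]
  have e1 : ((k * k - k - 2 : ℕ) : ℝ) = (k:ℝ) * k - k - 2 := by
    rw [Nat.cast_sub hkk, Nat.cast_sub hkle]
    push_cast; ring
  -- part 1
  have sumbound : ∑ c ∈ T, ∑ c' ∈ T, ((Finset.univ.filter fun i : Fin m => c i ≠ c' i).card : ℝ)
      ≤ 2 * ((k.choose 2 : ℝ) * m - m) := by
    have h1 : ∑ c ∈ T, ∑ c' ∈ T, (Finset.univ.filter fun i : Fin m => c i ≠ c' i).card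
        ≤ m * (k * k - k - 2) := by
      rw [hswap]
      calc ∑ i : Fin m, ((T ×ˢ T).filter fun p => p.1 i ≠ p.2 i).card
          ≤ ∑ _i : Fin m, (k * k - k - 2) :=
            Finset.sum_le_sum fun i _ => Nat.le_sub_of_add_le (key i)
        _ = m * (k * k - k - 2) := by
            rw [Finset.sum_const, Finset.card_univ, Fintype.card_fin, smul_eq_mul]
    calc ∑ c ∈ T, ∑ c' ∈ T, ((Finset.univ.filter fun i : Fin m => c i ≠ c' i).card : ℝ)
        = ((∑ c ∈ T, ∑ c' ∈ T, (Finset.univ.filter fun i : Fin m => c i ≠ c' i).card : ℕ) : ℝ) := by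
          push_cast; rfl
      _ ≤ ((m * (k * k - k - 2) : ℕ) : ℝ) := by exact_mod_cast h1
      _ = 2 * ((k.choose 2 : ℝ) * m - m) := by rw [Nat.cast_mul, e1, hC]; ring
  -- double sum equals offDiag sum
  have hdiagsum : ∑ c ∈ T, ∑ c' ∈ T, ((Finset.univ.filter fun i : Fin m => c i ≠ c' i).card : ℝ)
      = ∑ p ∈ T.offDiag, ((Finset.univ.filter fun i : Fin m => p.1 i ≠ p.2 i).card : ℝ) := by
    rw [← Finset.sum_product', ← Finset.diag_union_offDiag T,
      Finset.sum_union (Finset.disjoint_diag_offDiag T)]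
    have hz : ∑ p ∈ T.diag, ((Finset.univ.filter fun i : Fin m => p.1 i ≠ p.2 i).card : ℝ) = 0 := by
      apply Finset.sum_eq_zero
      intro p hp
      have := (Finset.mem_diag.1 hp).2
      simp [this]
    rw [hz, zero_add]
  have hoffR : (T.offDiag.card : ℝ) = 2 * (k.choose 2 : ℝ) := by
    rw [hoffcard, Nat.cast_sub hkle, hC]
    push_cast; ring
  -- part 2
  have pair : ∃ c ∈ T, ∃ c' ∈ T, c ≠ c' ∧
      ((Finset.univ.filter fun i : Fin m => c i ≠ c' i).card : ℝ)
        ≤ m * (1 - 1 / (k.choose 2 : ℝ)) := by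
    by_contra hcon
    push_neg at hcon
    have hne : T.offDiag.Nonempty := Finset.card_pos.1 (by rw [hoffcard]; exact Nat.lt_of_lt_of_le Nat.zero_lt_two hkk)
    have hlt : ∑ p ∈ T.offDiag, ((m:ℝ) * (1 - 1 / (k.choose 2 : ℝ)))
        < ∑ p ∈ T.offDiag, ((Finset.univ.filter fun i : Fin m => p.1 i ≠ p.2 i).card : ℝ) := by
      apply Finset.sum_lt_sum_of_nonempty hne
      intro p hp
      obtain ⟨h1, h2, h3⟩ := Finset.mem_offDiag.1 hp
      exact hcon p.1 h1 p.2 h2 h3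
    rw [Finset.sum_const, nsmul_eq_mul] at hlt
    rw [hdiagsum] at sumbound
    have hcalc : (T.offDiag.card : ℝ) * ((m:ℝ) * (1 - 1 / (k.choose 2 : ℝ)))
        = 2 * ((k.choose 2 : ℝ) * m - m) := by
      rw [hoffR]; field_simp
    linarith
  -- part 3
  have h3 : (m : ℝ) * (1 - 1 / (k.choose 2 : ℝ)) < (m : ℝ) * (1 - 2 / (k : ℝ) ^ 2) := by
    have hlt : 2 / (k:ℝ)^2 < 1 / (k.choose 2 : ℝ) := by
      rw [div_lt_div_iff₀ (by positivity) hCpos, hC]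
      nlinarith
    nlinarith
  refine ⟨sumbound, pair, h3, ?_⟩
  obtain ⟨c, hc, c', hc', hcne, hle⟩ := pair
  have := hdist c hc c' hc' hcne
  nlinarith
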